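/- Let S be a right Mori order in a simple Artinian ring Q and I a right divisorial right ideal of S. Then I is a finite intersection of ν-irreducible right divisorial right ideals of S, and each ν-irreducible right divisorial right ideal of S that properly admits a cover has the form aS :_r b = {s in S : bs in aS} for some regular elements a, b in S. -/

import Mathlib

/-! Basic notions for orders in a simple Artinian ring, following Halimi,
"Right Mori orders". Throughout, `Q` is a ring and `S` a subring of `Q`. -/

section Preamble

variable {Q : Type*} [Ring Q]

/-- `a` is a regular element of the subring `S` of `Q`, i.e. `a ∈ S` and `a` is
neither a left nor a right zero divisor in `S`. -/
def IsRegularElemIn (S : Subring Q) (a : Q) : Prop :=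
  a ∈ S ∧ (∀ b ∈ S, a * b = 0 → b = 0) ∧ (∀ b ∈ S, b * a = 0 → b = 0)

/-- `S` is an order in `Q`: every regular element of `S` is a unit of `Q` and every
element of `Q` is both a left fraction and a right fraction over `S`. -/
def IsOrderIn (S : Subring Q) : Prop :=
  (∀ a : Q, IsRegularElemIn S a → IsUnit a) ∧
  (∀ q : Q, ∃ a b : Q, a ∈ S ∧ IsRegularElemIn S b ∧ b * q = a) ∧
  (∀ q : Q, ∃ a b : Q, a ∈ S ∧ IsRegularElemIn S b ∧ q * b = a)

/-- A subset of `Q` that is a right `S`-submodule of `Q`. -/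
def IsRightModSet (S : Subring Q) (I : Set Q) : Prop :=
  (0 : Q) ∈ I ∧ (∀ x ∈ I, ∀ y ∈ I, x + y ∈ I) ∧ (∀ x ∈ I, -x ∈ I) ∧
    ∀ x ∈ I, ∀ s ∈ S, x * s ∈ I

/-- A subset of `Q` that is a left `S`-submodule of `Q`. -/
def IsLeftModSet (S : Subring Q) (I : Set Q) : Prop :=
  (0 : Q) ∈ I ∧ (∀ x ∈ I, ∀ y ∈ I, x + y ∈ I) ∧ (∀ x ∈ I, -x ∈ I) ∧
    ∀ x ∈ I, ∀ s ∈ S, s * x ∈ I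

/-- A (integral) right ideal of `S`, viewed as a subset of `Q`. -/
def IsRightIdealSet (S : Subring Q) (I : Set Q) : Prop :=
  IsRightModSet S I ∧ I ⊆ (S : Set Q)

/-- A (integral) left ideal of `S`, viewed as a subset of `Q`. -/
def IsLeftIdealSet (S : Subring Q) (I : Set Q) : Prop :=
  IsLeftModSet S I ∧ I ⊆ (S : Set Q)

/-- `(A : B)_r = {q ∈ Q : B q ⊆ A}`. -/
def colonR (A B : Set Q) : Set Q := {q : Q | ∀ b ∈ B, b * q ∈ A}

/-- `(A : B)_l = {q ∈ Q : q B ⊆ A}`. -/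
def colonL (A B : Set Q) : Set Q := {q : Q | ∀ b ∈ B, q * b ∈ A}

/-- `I^ν = (S : (S : I)_l)_r`. -/
def nuR (S : Subring Q) (I : Set Q) : Set Q := colonR (S : Set Q) (colonL (S : Set Q) I)

/-- `^ν I = (S : (S : I)_r)_l`. -/
def nuL (S : Subring Q) (I : Set Q) : Set Q := colonL (S : Set Q) (colonR (S : Set Q) I)

/-- A (fractional) right `S`-ideal: a right `S`-submodule of `Q` containing a regular
element of `S` and with `uI ⊆ S` for some unit `u` of `Q`. -/
def IsRightSIdeal (S : Subring Q) (I : Set Q) : Prop :=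
  IsRightModSet S I ∧ (∃ a ∈ I, IsRegularElemIn S a) ∧
    ∃ u : Qˣ, ∀ x ∈ I, (u : Q) * x ∈ S

/-- A (fractional) left `S`-ideal. -/
def IsLeftSIdeal (S : Subring Q) (I : Set Q) : Prop :=
  IsLeftModSet S I ∧ (∃ a ∈ I, IsRegularElemIn S a) ∧
    ∃ u : Qˣ, ∀ x ∈ I, x * (u : Q) ∈ S

/-- A completely prime right ideal of `S`: a proper right ideal `P` such that for all
`a, b ∈ S`, `aP ⊆ P` and `ab ∈ P` imply `a ∈ P` or `b ∈ P`. -/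
def IsCompletelyPrimeRightIdeal (S : Subring Q) (P : Set Q) : Prop :=
  IsRightIdealSet S P ∧ P ≠ (S : Set Q) ∧
    ∀ a ∈ S, ∀ b ∈ S, (∀ p ∈ P, a * p ∈ P) → a * b ∈ P → a ∈ P ∨ b ∈ P

/-- The right `S`-submodule of `Q` generated by a set `G`. -/
def rightSpan (S : Subring Q) (G : Set Q) : Set Q :=
  ⋂₀ {J : Set Q | IsRightModSet S J ∧ G ⊆ J}

/-- The left `S`-submodule of `Q` generated by a set `G`. -/
def leftSpan (S : Subring Q) (G : Set Q) : Set Q :=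
  ⋂₀ {J : Set Q | IsLeftModSet S J ∧ G ⊆ J}

/-- `I` is a finitely generated right `S`-submodule of `Q`. -/
def IsFGRightModSet (S : Subring Q) (I : Set Q) : Prop :=
  ∃ G : Finset Q, I = rightSpan S ↑G

/-- The ascending chain condition on regular integral right divisorial ideals of `S`. -/
def ACCRightDivisorial (S : Subring Q) : Prop :=
  ∀ f : ℕ → Set Q,
    (∀ n, IsRightIdealSet S (f n) ∧ (∃ a ∈ f n, IsRegularElemIn S a) ∧ nuR S (f n) = f n) →
    (∀ n, f n ⊆ f (n + 1)) → ∃ N, ∀ n, N ≤ n → f n = f N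

/-- The ascending chain condition on regular integral left divisorial ideals of `S`. -/
def ACCLeftDivisorial (S : Subring Q) : Prop :=
  ∀ f : ℕ → Set Q,
    (∀ n, IsLeftIdealSet S (f n) ∧ (∃ a ∈ f n, IsRegularElemIn S a) ∧ nuL S (f n) = f n) →
    (∀ n, f n ⊆ f (n + 1)) → ∃ N, ∀ n, N ≤ n → f n = f N

/-- A right Mori order: an order satisfying the ACC on regular integral right
divisorial ideals. -/
def IsRightMori (S : Subring Q) : Prop := IsOrderIn S ∧ ACCRightDivisorial S

/-- The principal right ideal `aS` of `S`, as a subset of `Q`. -/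
def principalRight (S : Subring Q) (a : Q) : Set Q := {x : Q | ∃ s ∈ S, x = a * s}

/-- The principal left ideal `Sa` of `S`, as a subset of `Q`. -/
def principalLeft (S : Subring Q) (a : Q) : Set Q := {x : Q | ∃ s ∈ S, x = s * a}

/-- A two-sided (integral) ideal of `S`, as a subset of `Q`. -/
def IsTwoSidedIdealSet (S : Subring Q) (I : Set Q) : Prop :=
  IsRightModSet S I ∧ IsLeftModSet S I ∧ I ⊆ (S : Set Q)

/-- A maximal (proper) right ideal of `S`. -/
def IsMaxRightIdeal (S : Subring Q) (M : Set Q) : Prop :=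
  IsRightIdealSet S M ∧ M ≠ (S : Set Q) ∧
    ∀ N, IsRightIdealSet S N → N ≠ (S : Set Q) → M ⊆ N → N = M

/-- A maximal (proper) left ideal of `S`. -/
def IsMaxLeftIdeal (S : Subring Q) (M : Set Q) : Prop :=
  IsLeftIdealSet S M ∧ M ≠ (S : Set Q) ∧
    ∀ N, IsLeftIdealSet S N → N ≠ (S : Set Q) → M ⊆ N → N = M

/-- `S` is local with (Jacobson radical) `M`: `M` is a two-sided ideal which is the
only maximal right ideal and the only maximal left ideal of `S`. -/
def IsLocalWithMax (S : Subring Q) (M : Set Q) : Prop :=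
  IsTwoSidedIdealSet S M ∧
    IsMaxRightIdeal S M ∧ (∀ N, IsMaxRightIdeal S N → N = M) ∧
    IsMaxLeftIdeal S M ∧ (∀ N, IsMaxLeftIdeal S N → N = M)

/-- A local order. -/
def IsLocalOrder (S : Subring Q) : Prop := IsOrderIn S ∧ ∃ M : Set Q, IsLocalWithMax S M

/-- The additive span of the set of products `a * b` with `a ∈ A`, `b ∈ B`. -/
def mulSpan (A B : Set Q) : Set Q :=
  (AddSubgroup.closure {x : Q | ∃ a ∈ A, ∃ b ∈ B, x = a * b} : AddSubgroup Q)

/-- Powers `M^n` of an ideal `M` of `S` (with `M^0 = S`). -/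
def idealPow (S : Subring Q) (M : Set Q) : ℕ → Set Q
  | 0 => (S : Set Q)
  | n + 1 => mulSpan M (idealPow S M n)

/-- A right `τ`-ideal of `S`: a right ideal `J` such that `F^ν ⊆ J` for every finitely
generated right ideal `F ⊆ J`. -/
def IsRightTauIdeal (S : Subring Q) (J : Set Q) : Prop :=
  IsRightIdealSet S J ∧
    ∀ F : Set Q, IsRightIdealSet S F → IsFGRightModSet S F → F ⊆ J → nuR S F ⊆ J

/-- A maximal (proper) right `τ`-ideal of `S`. -/
def IsMaxRightTauIdeal (S : Subring Q) (M : Set Q) : Prop :=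
  IsRightTauIdeal S M ∧ M ≠ (S : Set Q) ∧
    ∀ N, IsRightTauIdeal S N → N ≠ (S : Set Q) → M ⊆ N → N = M

/-- A prime (two-sided) ideal of the order `S`. -/
def IsPrimeIdealSet (S : Subring Q) (P : Set Q) : Prop :=
  IsTwoSidedIdealSet S P ∧ P ≠ (S : Set Q) ∧
    ∀ a ∈ S, ∀ b ∈ S, (∀ s ∈ S, a * s * b ∈ P) → a ∈ P ∨ b ∈ P

/-- A divisorial two-sided (integral) ideal of `S`: `I = I^ν = ^ν I`. -/
def IsDivisorialIdealSet (S : Subring Q) (I : Set Q) : Prop :=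
  IsTwoSidedIdealSet S I ∧ nuR S I = I ∧ nuL S I = I

/-- `D_m(S)`: the set of maximal divisorial (two-sided, integral) ideals of `S`. -/
def maxDivisorialIdeals (S : Subring Q) : Set (Set Q) :=
  {P | IsDivisorialIdealSet S P ∧ P ≠ (S : Set Q) ∧
    ∀ J, IsDivisorialIdealSet S J → J ≠ (S : Set Q) → P ⊆ J → J = P}

/-- `c` is regular modulo the ideal `P` of `S`. -/
def IsRegularModP (S : Subring Q) (P : Set Q) (c : Q) : Prop :=
  c ∈ S ∧ (∀ b ∈ S, c * b ∈ P → b ∈ P) ∧ (∀ b ∈ S, b * c ∈ P → b ∈ P)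

/-- The left order `O_l(M) = {q ∈ Q : qM ⊆ M}` of `M`. -/
def leftOrderOf (M : Set Q) : Set Q := {q : Q | ∀ m ∈ M, q * m ∈ M}

/-- `s` is a unit of the subring `R` of `Q`. -/
def IsUnitIn (R : Subring Q) (s : Q) : Prop :=
  s ∈ R ∧ ∃ t ∈ R, s * t = 1 ∧ t * s = 1

/-- A family of overrings `S = ⋂ᵢ Sᵢ` is of finite character if every nonzero
non-unit of `S` is a non-unit of only finitely many `Sᵢ`. -/
def FiniteCharacter {α : Type*} (S : Subring Q) (F : α → Subring Q) : Prop :=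
  ∀ s ∈ S, s ≠ 0 → ¬IsUnitIn S s → {i : α | ¬IsUnitIn (F i) s}.Finite

/-- `S` is right pseudo-coherent: any (nonempty) finite intersection of principal
right ideals of `S` is a finitely generated right ideal. -/
def RightPseudoCoherent (S : Subring Q) : Prop :=
  ∀ F : Finset Q, ↑F ⊆ (S : Set Q) → F.Nonempty →
    IsFGRightModSet S (⋂ a ∈ F, principalRight S a)

/-- `A :_r x = {s ∈ S : x s ∈ A}`. -/
def colonByElemR (S : Subring Q) (A : Set Q) (x : Q) : Set Q :=
  {s : Q | s ∈ S ∧ x * s ∈ A}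

/-- A `ν`-irreducible right ideal: a right divisorial right ideal which is not the
intersection of two right divisorial right ideals properly containing it. -/
def IsNuIrreducible (S : Subring Q) (I : Set Q) : Prop :=
  IsRightIdealSet S I ∧ nuR S I = I ∧
    ¬∃ A B : Set Q, (IsRightIdealSet S A ∧ nuR S A = A) ∧
      (IsRightIdealSet S B ∧ nuR S B = B) ∧ I ⊂ A ∧ I ⊂ B ∧ I = A ∩ B

/-- A non-commutative (rank one) discrete valuation ring inside `Q`. -/
def IsNCDVR (R : Subring Q) : Prop :=
  IsOrderIn R ∧ ∃ M : Set Q, IsLocalWithMax R M ∧ M ≠ ({0} : Set Q) ∧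
    (∃ p : Q, IsRegularElemIn R p ∧ M = principalRight R p ∧ M = principalLeft R p) ∧
    (⋂ n : ℕ, idealPow R M n) = ({0} : Set Q)

/-- A Krull order in the sense of Marubayashi. -/
def IsKrullOrder (S : Subring Q) : Prop :=
  ∃ (A : Set (Subring Q)) (B : Finset (Subring Q)),
    (∀ R ∈ A, (S : Set Q) ⊆ ↑R ∧ IsNCDVR R) ∧
    (∀ T ∈ B, (S : Set Q) ⊆ ↑T ∧ IsSimpleRing T ∧ IsNoetherianRing T) ∧
    ((S : Set Q) = (⋂ R ∈ A, (R : Set Q)) ∩ ⋂ T ∈ B, (T : Set Q)) ∧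
    ∀ c : Q, IsRegularElemIn S c →
      {R ∈ A | principalRight R c ≠ (R : Set Q)}.Finite ∧
      {R ∈ A | principalLeft R c ≠ (R : Set Q)}.Finite

end Preamble

namespace MoriAux

variable {Q : Type*} [Ring Q] {S : Subring Q}

theorem unit_reg {a : Q} (ha : a ∈ S) (hu : IsUnit a) : IsRegularElemIn S a :=
  ⟨ha, fun b _ h0 => hu.mul_left_cancel (h0.trans (mul_zero a).symm),
   fun b _ h0 => hu.mul_right_cancel (h0.trans (zero_mul a).symm)⟩

theorem one_reg : IsRegularElemIn S (1 : Q) := unit_reg S.one_mem isUnit_one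

theorem reg_mul (hS : IsOrderIn S) {a b : Q} (ha : IsRegularElemIn S a)
    (hb : IsRegularElemIn S b) : IsRegularElemIn S (a * b) :=
  unit_reg (S.mul_mem ha.1 hb.1) ((hS.1 a ha).mul (hS.1 b hb))

/-- common right multiple of two regular elements -/
theorem cd_pair (hS : IsOrderIn S) {d₁ d₂ : Q} (h1 : IsRegularElemIn S d₁)
    (h2 : IsRegularElemIn S d₂) :
    ∃ d, IsRegularElemIn S d ∧ (∃ s ∈ S, d = d₁ * s) ∧ ∃ s ∈ S, d = d₂ * s := by
  obtain ⟨u1, hu1⟩ := hS.1 d₁ h1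
  obtain ⟨a, b, haS, hbreg, hab⟩ := hS.2.2 ((↑u1⁻¹ : Q) * d₂)
  refine ⟨d₂ * b, reg_mul hS h2 hbreg, ⟨a, haS, ?_⟩, ⟨b, hbreg.1, rfl⟩⟩
  have : (u1 : Q) * (↑u1⁻¹ * d₂ * b) = ↑u1 * a := by rw [hab]
  rw [mul_assoc (↑u1⁻¹ : Q) d₂ b, Units.mul_inv_cancel_left] at this
  rw [this, hu1]

/-- common right denominator for a list -/
theorem cd_list (hS : IsOrderIn S) (l : List Q) :
    ∃ d, IsRegularElemIn S d ∧ ∀ q ∈ l, q * d ∈ S := by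
  induction l with
  | nil => exact ⟨1, one_reg, by simp⟩
  | cons q l ih =>
    obtain ⟨d₀, hd₀, hl⟩ := ih
    obtain ⟨a, b, haS, hbreg, hab⟩ := hS.2.2 q
    obtain ⟨d, hd, ⟨s₁, hs₁, hds₁⟩, ⟨s₂, hs₂, hds₂⟩⟩ := cd_pair hS hd₀ hbreg
    refine ⟨d, hd, ?_⟩
    intro q' hq'
    rcases List.mem_cons.mp hq' with h | h
    · subst h
      rw [hds₂, ← mul_assoc, hab]
      exact S.mul_mem haS hs₂
    · rw [hds₁, ← mul_assoc]
      exact S.mul_mem (hl q' h) hs₁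

/-- common left multiple of two regular elements -/
theorem lcm_pair (hS : IsOrderIn S) {e₁ e₂ : Q} (h1 : IsRegularElemIn S e₁)
    (h2 : IsRegularElemIn S e₂) :
    ∃ e, IsRegularElemIn S e ∧ (∃ s ∈ S, e = s * e₁) ∧ ∃ s ∈ S, e = s * e₂ := by
  obtain ⟨u1, hu1⟩ := hS.1 e₁ h1
  obtain ⟨a, b, haS, hbreg, hab⟩ := hS.2.1 (e₂ * (↑u1⁻¹ : Q))
  refine ⟨b * e₂, reg_mul hS hbreg h2, ⟨a, haS, ?_⟩, ⟨b, hbreg.1, rfl⟩⟩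
  have : b * (e₂ * ↑u1⁻¹) * ↑u1 = a * ↑u1 := by rw [hab]
  rw [mul_assoc b _ _, mul_assoc e₂ _ _, Units.inv_mul, mul_one] at this
  rw [this, hu1]


section Prime
variable [IsSimpleRing Q]

theorem prime_lemma (hS : IsOrderIn S) {x y : Q} (hx : x ≠ 0) (hy : y ≠ 0)
    (h : ∀ s ∈ S, x * (s * y) = 0) : False := by
  classical
  set Zgen : Set Q := {w | ∃ s ∈ S, ∃ t ∈ S, w = s * y * t} with hZgen
  set Z : AddSubgroup Q := AddSubgroup.closure Zgen with hZdef
  have hkill : ∀ w ∈ Z, x * w = 0 := by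
    intro w hw
    induction hw using AddSubgroup.closure_induction with
    | mem w hw =>
      obtain ⟨s, hs, t, ht, rfl⟩ := hw
      rw [show x * (s * y * t) = x * (s * y) * t by noncomm_ring, h s hs, zero_mul]
    | zero => exact mul_zero x
    | add w₁ w₂ h₁ h₂ p₁ p₂ => rw [mul_add, p₁, p₂, add_zero]
    | neg w hw p => rw [mul_neg, p, neg_zero]
  have hstable : ∀ w ∈ Z, ∀ s ∈ S, ∀ t ∈ S, s * w * t ∈ Z := by
    intro w hw
    induction hw using AddSubgroup.closure_induction with
    | mem w hw =>
      intro s hs t ht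
      obtain ⟨s₁, hs₁, t₁, ht₁, rfl⟩ := hw
      refine AddSubgroup.subset_closure ⟨s * s₁, S.mul_mem hs hs₁, t₁ * t, S.mul_mem ht₁ ht, ?_⟩
      noncomm_ring
    | zero => intro s hs t ht; rw [mul_zero, zero_mul]; exact Z.zero_mem
    | add w₁ w₂ h₁ h₂ p₁ p₂ =>
      intro s hs t ht
      rw [mul_add, add_mul]
      exact Z.add_mem (p₁ s hs t ht) (p₂ s hs t ht)
    | neg w hw p =>
      intro s hs t ht
      rw [mul_neg, neg_mul]
      exact Z.neg_mem (p s hs t ht)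
  set Jgen : Set Q := {w | ∃ q q' : Q, w = q * y * q'} with hJgen
  set J : AddSubgroup Q := AddSubgroup.closure Jgen with hJdef
  have hJl : ∀ r : Q, ∀ w ∈ J, r * w ∈ J := by
    intro r w hw
    induction hw using AddSubgroup.closure_induction with
    | mem w hw =>
      obtain ⟨q, q', rfl⟩ := hw
      exact AddSubgroup.subset_closure ⟨r * q, q', by noncomm_ring⟩
    | zero => rw [mul_zero]; exact J.zero_mem
    | add w₁ w₂ h₁ h₂ p₁ p₂ => rw [mul_add]; exact J.add_mem p₁ p₂
    | neg w hw p => rw [mul_neg]; exact J.neg_mem p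
  have hJr : ∀ r : Q, ∀ w ∈ J, w * r ∈ J := by
    intro r w hw
    induction hw using AddSubgroup.closure_induction with
    | mem w hw =>
      obtain ⟨q, q', rfl⟩ := hw
      exact AddSubgroup.subset_closure ⟨q, q' * r, by noncomm_ring⟩
    | zero => rw [zero_mul]; exact J.zero_mem
    | add w₁ w₂ h₁ h₂ p₁ p₂ => rw [add_mul]; exact J.add_mem p₁ p₂
    | neg w hw p => rw [neg_mul]; exact J.neg_mem p
  set T : TwoSidedIdeal Q := TwoSidedIdeal.mk' (J : Set Q) J.zero_mem
    (fun ha hb => J.add_mem ha hb) (fun ha => J.neg_mem ha)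
    (fun {a b} hb => hJl a b hb) (fun {a b} ha => hJr b a ha) with hTdef
  have hyT : y ∈ T := by
    rw [hTdef, TwoSidedIdeal.mem_mk']
    exact AddSubgroup.subset_closure ⟨1, 1, by noncomm_ring⟩
  have hTtop : T = ⊤ := by
    rcases eq_bot_or_eq_top T with hbot | htop
    · rw [hbot, TwoSidedIdeal.mem_bot] at hyT
      exact absurd hyT hy
    · exact htop
  have h1J : (1 : Q) ∈ J := by
    have : (1 : Q) ∈ T := hTtop ▸ TwoSidedIdeal.mem_top Q
    rwa [hTdef, TwoSidedIdeal.mem_mk'] at this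
  have key : ∀ w ∈ J, ∃ e d : Q, IsRegularElemIn S e ∧ IsRegularElemIn S d ∧ e * w * d ∈ Z := by
    intro w hw
    induction hw using AddSubgroup.closure_induction with
    | mem w hw =>
      obtain ⟨q, q', rfl⟩ := hw
      obtain ⟨a, b, haS, hbreg, hab⟩ := hS.2.1 q
      obtain ⟨a', b', ha'S, hb'reg, hab'⟩ := hS.2.2 q'
      refine ⟨b, b', hbreg, hb'reg, ?_⟩
      rw [show b * (q * y * q') * b' = (b * q) * y * (q' * b') by noncomm_ring, hab, hab']
      exact AddSubgroup.subset_closure ⟨a, haS, a', ha'S, rfl⟩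
    | zero =>
      exact ⟨1, 1, one_reg, one_reg, by rw [mul_zero, zero_mul]; exact Z.zero_mem⟩
    | add w₁ w₂ h₁ h₂ p₁ p₂ =>
      obtain ⟨e₁, d₁, he₁, hd₁, hz₁⟩ := p₁
      obtain ⟨e₂, d₂, he₂, hd₂, hz₂⟩ := p₂
      obtain ⟨e, he, ⟨s₁, hs₁, hse₁⟩, ⟨s₂, hs₂, hse₂⟩⟩ := lcm_pair hS he₁ he₂
      obtain ⟨d, hd, ⟨t₁, ht₁, hdt₁⟩, ⟨t₂, ht₂, hdt₂⟩⟩ := cd_pair hS hd₁ hd₂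
      refine ⟨e, d, he, hd, ?_⟩
      have k₁ : e * w₁ * d ∈ Z := by
        rw [hse₁, hdt₁, show s₁ * e₁ * w₁ * (d₁ * t₁) = s₁ * (e₁ * w₁ * d₁) * t₁ by noncomm_ring]
        exact hstable _ hz₁ s₁ hs₁ t₁ ht₁
      have k₂ : e * w₂ * d ∈ Z := by
        rw [hse₂, hdt₂, show s₂ * e₂ * w₂ * (d₂ * t₂) = s₂ * (e₂ * w₂ * d₂) * t₂ by noncomm_ring]
        exact hstable _ hz₂ s₂ hs₂ t₂ ht₂
      rw [show e * (w₁ + w₂) * d = e * w₁ * d + e * w₂ * d by noncomm_ring]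
      exact Z.add_mem k₁ k₂
    | neg w hw p =>
      obtain ⟨e, d, he, hd, hz⟩ := p
      exact ⟨e, d, he, hd, by
        rw [show e * (-w) * d = -(e * w * d) by noncomm_ring]; exact Z.neg_mem hz⟩
  obtain ⟨e, d, he, hd, hzed⟩ := key 1 h1J
  have h0 : x * (e * 1 * d) = 0 := hkill _ hzed
  rw [mul_one] at h0
  have hu : IsUnit (e * d) := hS.1 _ (reg_mul hS he hd)
  exact hx (hu.mul_right_cancel (h0.trans (zero_mul (e * d)).symm))

end Prime


section Semisimple

/-- Right multiplication as a left-linear endomorphism. -/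
def rmul (u : Q) : Q →ₗ[Q] Q where
  toFun y := y * u
  map_add' := fun a b => add_mul a b u
  map_smul' := fun r a => by simp only [smul_eq_mul, RingHom.id_apply, mul_assoc]

@[simp] theorem rmul_apply (u y : Q) : rmul u y = y * u := rfl

theorem ssQ [IsSimpleRing Q] [IsArtinianRing Q] : IsSemisimpleRing Q := by
  classical
  set T : Submodule Q Q := sSup {m : Submodule Q Q | IsSimpleModule Q m} with hTdef
  have hmapT : ∀ r : Q, ∀ x ∈ T, x * r ∈ T := by
    intro r
    have hle : T ≤ Submodule.comap (rmul r) T := by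
      apply sSup_le
      intro m hm
      rw [← Submodule.map_le_iff_le_comap]
      rcases eq_or_ne (Submodule.map (rmul r) m) ⊥ with hbot | hne
      · rw [hbot]; exact bot_le
      · apply le_sSup
        haveI hm' : IsSimpleModule Q m := hm
        set g := (rmul r).comp m.subtype with hg
        have hrange : LinearMap.range g = Submodule.map (rmul r) m := by
          rw [hg, LinearMap.range_comp, Submodule.range_subtype]
        rcases eq_bot_or_eq_top (LinearMap.ker g) with hker | hker
        · have einj : Function.Injective g := LinearMap.ker_eq_bot.mp hker
          have : IsSimpleModule Q (LinearMap.range g) :=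
            IsSimpleModule.congr (LinearEquiv.ofInjective g einj).symm
          rw [hrange] at this
          exact this
        · exfalso
          apply hne
          rw [← hrange, LinearMap.ker_eq_top.mp hker, LinearMap.range_zero]
    intro x hx
    exact hle hx
  have hTne : T ≠ ⊥ := by
    haveI : IsAtomic (Submodule Q Q) :=
      isAtomic_of_orderBot_wellFounded_lt (wellFounded_lt (α := Submodule Q Q))
    rcases (IsAtomic.eq_bot_or_exists_atom_le (⊤ : Submodule Q Q)) with h | ⟨a, ha, _⟩
    · exfalso
      have : (1 : Q) ∈ (⊤ : Submodule Q Q) := trivial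
      rw [h] at this
      simp only [Submodule.mem_bot] at this
      exact one_ne_zero this
    · intro hT
      have haT : a ≤ T := le_sSup (isSimpleModule_iff_isAtom.mpr ha)
      rw [hT, le_bot_iff] at haT
      exact ha.1 haT
  have hTtop : T = ⊤ := by
    set Tt : TwoSidedIdeal Q := TwoSidedIdeal.mk' (T : Set Q) T.zero_mem
      (fun ha hb => T.add_mem ha hb) (fun ha => T.neg_mem ha)
      (fun {a b} hb => T.smul_mem a hb) (fun {a b} ha => hmapT b a ha) with hTt
    obtain ⟨z, hzT, hz0⟩ := Submodule.exists_mem_ne_zero_of_ne_bot hTne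
    have hzTt : z ∈ Tt := by rw [hTt, TwoSidedIdeal.mem_mk']; exact hzT
    have : Tt = ⊤ := by
      rcases eq_bot_or_eq_top Tt with hb | ht
      · rw [hb, TwoSidedIdeal.mem_bot] at hzTt; exact absurd hzTt hz0
      · exact ht
    have h1 : (1 : Q) ∈ T := by
      have : (1 : Q) ∈ Tt := this ▸ TwoSidedIdeal.mem_top Q
      rwa [hTt, TwoSidedIdeal.mem_mk'] at this
    rw [eq_top_iff]
    intro x _
    simpa using T.smul_mem x h1
  exact IsSemisimpleModule.of_sSup_simples_eq_top hTtop

theorem leftIdeal_idem [IsSemisimpleRing Q] (N : Submodule Q Q) :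
    ∃ e : Q, e * e = e ∧ e ∈ N ∧ (∀ a ∈ N, a * e = a) ∧ N = Submodule.span Q {e} := by
  obtain ⟨N', hc⟩ := exists_isCompl N
  have h1 : (1 : Q) ∈ N ⊔ N' := by rw [hc.sup_eq_top]; trivial
  obtain ⟨e, heN, e', he'N', hee'⟩ := Submodule.mem_sup.mp h1
  have hfix : ∀ a ∈ N, a * e = a := by
    intro a ha
    have he' : e' = 1 - e := by rw [← hee']; abel
    have h1' : a - a * e ∈ N := N.sub_mem ha (N.smul_mem a heN)
    have h2' : a - a * e ∈ N' := by
      have : a - a * e = a * e' := by rw [he', mul_sub, mul_one]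
      rw [this]
      exact N'.smul_mem a he'N'
    have : a - a * e ∈ N ⊓ N' := ⟨h1', h2'⟩
    rw [disjoint_iff.mp hc.disjoint] at this
    simp only [Submodule.mem_bot, sub_eq_zero] at this
    exact this.symm
  refine ⟨e, hfix e heN, heN, hfix, le_antisymm ?_ ?_⟩
  · intro a ha
    exact Submodule.mem_span_singleton.mpr ⟨a, hfix a ha⟩
  · rw [Submodule.span_le, Set.singleton_subset_iff]
    exact heN

theorem vnr [IsSemisimpleRing Q] (a : Q) : ∃ x : Q, a * (x * a) = a := by
  obtain ⟨e, _, heN, hfix, _⟩ := leftIdeal_idem (Submodule.span Q {a})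
  obtain ⟨x, hx⟩ := Submodule.mem_span_singleton.mp heN
  exact ⟨x, by rw [show x * a = x • a from rfl, hx]; exact hfix a (Submodule.mem_span_singleton_self a)⟩

theorem mem_rspan_singleton {f x : Q} :
    x ∈ Submodule.span Qᵐᵒᵖ {f} ↔ ∃ r : Q, x = f * r := by
  rw [Submodule.mem_span_singleton]
  constructor
  · rintro ⟨r, rfl⟩
    exact ⟨r.unop, rfl⟩
  · rintro ⟨r, rfl⟩
    exact ⟨MulOpposite.op r, rfl⟩

theorem rspan_pair [IsSemisimpleRing Q] (f b : Q) (hf : f * f = f) :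
    ∃ e : Q, e * e = e ∧
      Submodule.span Qᵐᵒᵖ {f, b} = Submodule.span Qᵐᵒᵖ {e} := by
  obtain ⟨x, hx⟩ := vnr (b - f * b)
  set c : Q := b - f * b with hc
  have hcxc : c * x * c = c := by rw [mul_assoc]; exact hx
  have hfc : f * c = 0 := by rw [hc, mul_sub, ← mul_assoc, hf, sub_self]
  have hfe₁ : f * (c * x) = 0 := by rw [← mul_assoc, hfc, zero_mul]
  have hE : c * x * (c * x) = c * x := by
    rw [show c * x * (c * x) = c * x * c * x by noncomm_ring, hcxc]
  have hh : (c * x - c * x * f) * (c * x - c * x * f) = c * x - c * x * f := by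
    rw [show (c * x - c * x * f) * (c * x - c * x * f)
        = c * x * (c * x) - c * x * (f * (c * x)) - c * x * (c * x) * f
          + c * x * (f * (c * x)) * f by noncomm_ring, hfe₁, hE]
    simp
  have hfh : f * (c * x - c * x * f) = 0 := by
    rw [show f * (c * x - c * x * f) = f * (c * x) - f * (c * x) * f by noncomm_ring, hfe₁]
    simp
  have hhf : (c * x - c * x * f) * f = 0 := by
    rw [show (c * x - c * x * f) * f = c * x * f - c * x * (f * f) by noncomm_ring, hf, sub_self]
  have he : (f + (c * x - c * x * f)) * (f + (c * x - c * x * f))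
      = f + (c * x - c * x * f) := by
    rw [add_mul, mul_add, mul_add, hf, hfh, hhf, hh, add_zero, zero_add]
  have hef : (f + (c * x - c * x * f)) * f = f := by rw [add_mul, hf, hhf, add_zero]
  have hhe₁ : (c * x - c * x * f) * (c * x) = c * x := by
    rw [show (c * x - c * x * f) * (c * x)
        = c * x * (c * x) - c * x * (f * (c * x)) by noncomm_ring, hfe₁, hE]
    simp
  have hee₁ : (f + (c * x - c * x * f)) * (c * x) = c * x := by
    rw [add_mul, hhe₁]
    rw [hfe₁, zero_add]
  refine ⟨f + (c * x - c * x * f), he, le_antisymm ?_ ?_⟩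
  · rw [Submodule.span_le]
    intro w hw
    rcases hw with hw | hw
    · rw [hw]
      exact mem_rspan_singleton.mpr ⟨f, hef.symm⟩
    · rw [Set.mem_singleton_iff.mp hw]
      have hkey : (f + (c * x - c * x * f)) * (f * b + c * x * c) = b := by
        rw [mul_add, ← mul_assoc (f + (c * x - c * x * f)) f b,
            ← mul_assoc (f + (c * x - c * x * f)) (c * x) c, hef, hee₁, hcxc, hc]
        abel
      exact mem_rspan_singleton.mpr ⟨f * b + c * x * c, hkey.symm⟩
  · rw [Submodule.span_le, Set.singleton_subset_iff]
    have hmem : ∀ r₁ r₂ : Q, f * r₁ + b * r₂ ∈ Submodule.span Qᵐᵒᵖ {f, b} := by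
      intro r₁ r₂
      have h1 : f ∈ Submodule.span Qᵐᵒᵖ ({f, b} : Set Q) :=
        Submodule.subset_span (Set.mem_insert f {b})
      have h2 : b ∈ Submodule.span Qᵐᵒᵖ ({f, b} : Set Q) :=
        Submodule.subset_span (Set.mem_insert_of_mem f rfl)
      exact Submodule.add_mem _
        (Submodule.smul_mem _ (MulOpposite.op r₁) h1)
        (Submodule.smul_mem _ (MulOpposite.op r₂) h2)
    have hidentity : f + (c * x - c * x * f)
        = f * (1 - b * x + b * x * f) + b * (x - x * f) := by
      rw [hc]
      noncomm_ring
    rw [hidentity]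
    exact hmem _ _

/-- Every finitely generated right ideal of a (left) semisimple ring is generated
by an idempotent. -/
theorem rspan_finset [IsSemisimpleRing Q] (F : Finset Q) :
    ∃ f : Q, f * f = f ∧ Submodule.span Qᵐᵒᵖ (F : Set Q) = Submodule.span Qᵐᵒᵖ {f} := by
  classical
  induction F using Finset.induction_on with
  | empty =>
    refine ⟨0, by rw [mul_zero], ?_⟩
    rw [Finset.coe_empty, Submodule.span_empty, Submodule.span_zero_singleton]
  | @insert b F' hb ih =>
    obtain ⟨f, hff, hsp⟩ := ih
    obtain ⟨e, hee, hpair⟩ := rspan_pair f b hff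
    refine ⟨e, hee, ?_⟩
    have hfb : Submodule.span Qᵐᵒᵖ ({f, b} : Set Q)
        = Submodule.span Qᵐᵒᵖ {f} ⊔ Submodule.span Qᵐᵒᵖ {b} :=
      Submodule.span_insert f {b}
    rw [Finset.coe_insert, Submodule.span_insert, hsp, sup_comm, ← hfb, hpair]

/-- The left annihilator of a set, as a left ideal. -/
def lannSet (X : Set Q) : Submodule Q Q where
  carrier := {y | ∀ x ∈ X, y * x = 0}
  add_mem' := fun ha hb x hx => by rw [add_mul, ha x hx, hb x hx, add_zero]
  zero_mem' := fun x _ => zero_mul x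
  smul_mem' := fun r y hy x hx => by
    rw [smul_eq_mul, mul_assoc, hy x hx, mul_zero]

theorem mem_lannSet {X : Set Q} {y : Q} : y ∈ lannSet X ↔ ∀ x ∈ X, y * x = 0 := Iff.rfl

/-- Every right ideal of a simple artinian ring is generated by an idempotent. -/
theorem rid_idem [IsSemisimpleRing Q] [IsArtinianRing Q] (N : Submodule Qᵐᵒᵖ Q) :
    ∃ f : Q, f * f = f ∧ f ∈ N ∧ N = Submodule.span Qᵐᵒᵖ {f} := by
  classical
  obtain ⟨L₀, ⟨F₀, hF₀N, hL₀⟩, hmin⟩ := IsArtinian.set_has_minimal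
    {L : Submodule Q Q | ∃ F : Finset Q, (F : Set Q) ⊆ (N : Set Q) ∧ L = lannSet (F : Set Q)}
    ⟨lannSet ((∅ : Finset Q) : Set Q), ⟨∅, by simp, rfl⟩⟩
  have hlann : ∀ y ∈ L₀, ∀ x ∈ N, y * x = 0 := by
    intro y hy x hxN
    by_contra hne
    have hsub : lannSet (insert x (F₀ : Set Q)) ≤ L₀ := by
      rw [hL₀]
      intro z hz w hw
      exact hz w (Set.mem_insert_of_mem _ hw)
    have hmem : lannSet (insert x (F₀ : Set Q))
        ∈ {L : Submodule Q Q | ∃ F : Finset Q, (F : Set Q) ⊆ (N : Set Q) ∧ L = lannSet (F : Set Q)} := by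
      refine ⟨insert x F₀, ?_, by rw [Finset.coe_insert]⟩
      rw [Finset.coe_insert]
      exact Set.insert_subset hxN hF₀N
    have heq : lannSet (insert x (F₀ : Set Q)) = L₀ := by
      by_contra hne2
      exact hmin _ hmem (lt_of_le_of_ne hsub hne2)
    rw [← heq] at hy
    exact hne (hy x (Set.mem_insert x _))
  obtain ⟨f, hff, hspF⟩ := rspan_finset F₀
  have hfN : f ∈ N := by
    have : f ∈ Submodule.span Qᵐᵒᵖ (F₀ : Set Q) := by
      rw [hspF]
      exact Submodule.mem_span_singleton_self f
    exact Submodule.span_le.mpr hF₀N this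
  refine ⟨f, hff, hfN, le_antisymm ?_ ?_⟩
  · intro x hx
    have h1f : (1 - f) ∈ L₀ := by
      rw [hL₀, mem_lannSet]
      intro w hw
      have : w ∈ Submodule.span Qᵐᵒᵖ ({f} : Set Q) := by
        rw [← hspF]
        exact Submodule.subset_span hw
      obtain ⟨r, rfl⟩ := mem_rspan_singleton.mp this
      rw [sub_mul, one_mul, ← mul_assoc, hff, sub_self]
    have := hlann _ h1f x hx
    rw [sub_mul, one_mul, sub_eq_zero] at this
    exact mem_rspan_singleton.mpr ⟨x, this⟩
  · rw [Submodule.span_le, Set.singleton_subset_iff]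
    exact hfN

/-- Right ideals with ≤-related left annihilators are ⊇-related. -/
theorem rid_le_of_lann [IsSemisimpleRing Q] [IsArtinianRing Q]
    (N N' : Submodule Qᵐᵒᵖ Q)
    (h : ∀ y : Q, (∀ x ∈ N, y * x = 0) → ∀ x ∈ N', y * x = 0) : N' ≤ N := by
  obtain ⟨f, hff, _, hsp⟩ := rid_idem N
  intro x hx
  have h1 : ∀ w ∈ N, (1 - f) * w = 0 := by
    intro w hw
    rw [hsp] at hw
    obtain ⟨r, rfl⟩ := mem_rspan_singleton.mp hw
    rw [sub_mul, one_mul, ← mul_assoc, hff, sub_self]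
  have hx0 := h (1 - f) h1 x hx
  rw [sub_mul, one_mul, sub_eq_zero] at hx0
  rw [hsp]
  exact mem_rspan_singleton.mpr ⟨x, hx0⟩

end Semisimple


section Coset
variable [IsSimpleRing Q] [IsArtinianRing Q]

theorem mem_lann_singleton {u y : Q} : y ∈ lannSet {u} ↔ y * u = 0 := by
  simp [mem_lannSet]

theorem unit_of_lann_bot (u : Q) (h : ∀ y : Q, y * u = 0 → y = 0) : IsUnit u := by
  have hinj : Function.Injective (rmul u) := by
    intro y y' hyy'
    have h0 : (y - y') * u = 0 := by
      rw [sub_mul, sub_eq_zero]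
      exact hyy'
    have := h _ h0
    rwa [sub_eq_zero] at this
  obtain ⟨v, hv⟩ := IsArtinian.surjective_of_injective_endomorphism (rmul u) hinj 1
  have hv' : v * u = 1 := hv
  have huv : u * v = 1 := by
    have h0 : (u * v - 1) * u = 0 := by
      rw [sub_mul, one_mul, mul_assoc, hv', mul_one, sub_self]
    have := h _ h0
    rwa [sub_eq_zero] at this
  exact ⟨⟨u, v, huv, hv'⟩, rfl⟩

theorem coset_unit (hS : IsOrderIn S) (c : Q) : ∃ t ∈ S, IsUnit (c + t) := by
  haveI hss : IsSemisimpleRing Q := ssQ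
  haveI hnoe : IsNoetherian Q Q := ((IsSemisimpleModule.finite_tfae (R := Q) (M := Q)).out 0 1).mp (Module.Finite.self Q)
  obtain ⟨a₀, b, ha₀S, hbreg, hab⟩ := hS.2.2 c
  obtain ⟨ub, hub⟩ := hS.1 b hbreg
  have main : ∃ s ∈ S, IsUnit (a₀ + s * b) := by
    obtain ⟨L₀, ⟨s₀, hs₀S, hL₀⟩, hmin⟩ := IsArtinian.set_has_minimal
      {L : Submodule Q Q | ∃ s ∈ (S : Set Q), L = lannSet {a₀ + s * b}}
      ⟨lannSet {a₀ + (0 : Q) * b}, ⟨0, S.zero_mem, rfl⟩⟩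
    set u : Q := a₀ + s₀ * b with hu
    rcases eq_or_ne L₀ ⊥ with hbot | hne
    · refine ⟨s₀, hs₀S, unit_of_lann_bot u ?_⟩
      intro y hy
      have hyL : y ∈ L₀ := by
        rw [hL₀]
        exact mem_lann_singleton.mpr hy
      rw [hbot, Submodule.mem_bot] at hyL
      exact hyL
    · exfalso
      have hRune : LinearMap.range (rmul u) ≠ ⊤ := by
        intro htop
        have hsurj : Function.Surjective (rmul u) := LinearMap.range_eq_top.mp htop
        have hinj := IsNoetherian.injective_of_surjective_endomorphism (rmul u) hsurj
        apply hne
        rw [hL₀]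
        rw [Submodule.eq_bot_iff]
        intro y hy
        have hy0 : y * u = 0 := mem_lann_singleton.mp hy
        exact hinj (show rmul u y = rmul u 0 by
          rw [rmul_apply, rmul_apply, hy0, zero_mul])
      obtain ⟨e, hee, heRu, hfix, hRuspan⟩ := leftIdeal_idem (LinearMap.range (rmul u))
      have he1 : e ≠ 1 := by
        intro h1
        apply hRune
        rw [eq_top_iff]
        intro z _
        have : z * e ∈ LinearMap.range (rmul u) :=
          Submodule.smul_mem _ z heRu
        rwa [h1, mul_one] at this
      set g : Q := 1 - e with hg
      have hgne : g ≠ 0 := sub_ne_zero.mpr (Ne.symm he1)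
      have hge : g * e = 0 := by rw [hg, sub_mul, one_mul, hee, sub_self]
      have hdisj : ∀ w, w ∈ LinearMap.range (rmul u) → w ∈ Submodule.span Q {g} → w = 0 := by
        intro w hw hw'
        have h1 : w * e = w := hfix w hw
        obtain ⟨r, hr⟩ := Submodule.mem_span_singleton.mp hw'
        have h2 : w * e = 0 := by
          rw [← hr, show (r • g) * e = r * (g * e) from by rw [smul_eq_mul, mul_assoc], hge,
            mul_zero]
        rw [← h1, h2]
      obtain ⟨y₀, hy₀L, hy₀ne⟩ := Submodule.exists_mem_ne_zero_of_ne_bot hne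
      have hy₀u : y₀ * u = 0 := by
        rw [hL₀] at hy₀L
        exact mem_lann_singleton.mp hy₀L
      obtain ⟨a₁, b₁, ha₁S, hb₁reg, hab₁⟩ := hS.2.1 y₀
      obtain ⟨ub₁, hub₁⟩ := hS.1 b₁ hb₁reg
      have ha₁ne : a₁ ≠ 0 := by
        intro h0
        apply hy₀ne
        calc y₀ = ↑ub₁⁻¹ * (b₁ * y₀) := by
              rw [← mul_assoc, ← hub₁, Units.inv_mul, one_mul]
        _ = 0 := by rw [hab₁, h0, mul_zero]
      have ha₁u : a₁ * u = 0 := by rw [← hab₁, mul_assoc, hy₀u, mul_zero]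
      set y₁ : Q := g * ↑ub⁻¹ with hy₁
      have hy₁ne : y₁ ≠ 0 := by
        intro h0
        apply hgne
        calc g = y₁ * b := by rw [hy₁, mul_assoc, ← hub, Units.inv_mul, mul_one]
        _ = 0 := by rw [h0, zero_mul]
      obtain ⟨a₂, b₂, ha₂S, hb₂reg, hab₂⟩ := hS.2.1 y₁
      obtain ⟨ub₂, hub₂⟩ := hS.1 b₂ hb₂reg
      have ha₂ne : a₂ ≠ 0 := by
        intro h0
        apply hy₁ne
        calc y₁ = ↑ub₂⁻¹ * (b₂ * y₁) := by
              rw [← mul_assoc, ← hub₂, Units.inv_mul, one_mul]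
        _ = 0 := by rw [hab₂, h0, mul_zero]
      have ha₂b : a₂ * b ∈ Submodule.span Q {g} := by
        have : a₂ * b = b₂ • g := by
          rw [smul_eq_mul, ← hab₂, hy₁, mul_assoc, mul_assoc, ← hub, Units.inv_mul, mul_one]
        rw [this]
        exact Submodule.smul_mem _ b₂ (Submodule.mem_span_singleton_self g)
      have hex : ¬∀ s ∈ S, a₁ * (s * a₂) = 0 := fun hall =>
        prime_lemma hS ha₁ne ha₂ne hall
      push_neg at hex
      obtain ⟨s₁, hs₁S, hs₁ne⟩ := hex
      set xs : Q := s₁ * a₂ with hxs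
      have hrw : a₀ + (s₀ + xs) * b = u + xs * b := by rw [hu]; noncomm_ring
      have hmem' : lannSet {a₀ + (s₀ + xs) * b}
          ∈ {L : Submodule Q Q | ∃ s ∈ (S : Set Q), L = lannSet {a₀ + s * b}} :=
        ⟨s₀ + xs, S.add_mem hs₀S (S.mul_mem hs₁S ha₂S), rfl⟩
      have hsub : lannSet {a₀ + (s₀ + xs) * b} ≤ L₀ := by
        intro y hy
        have hyu' : y * (u + xs * b) = 0 := by
          rw [← hrw]
          exact mem_lann_singleton.mp hy
        have hyxs : y * (xs * b) ∈ Submodule.span Q {g} := by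
          have h1 : y * (xs * b) = (y * s₁) • (a₂ * b) := by
            rw [smul_eq_mul, hxs]
            noncomm_ring
          rw [h1]
          exact Submodule.smul_mem _ _ ha₂b
        have hyu0 : y * u = 0 := by
          apply hdisj (y * u) ⟨y, rfl⟩
          have : y * u = -(y * (xs * b)) := by
            rw [eq_neg_iff_add_eq_zero, ← mul_add]
            exact hyu'
          rw [this]
          exact Submodule.neg_mem _ hyxs
        rw [hL₀]
        exact mem_lann_singleton.mpr hyu0
      have hstrict : lannSet {a₀ + (s₀ + xs) * b} ≠ L₀ := by
        intro heq
        have ha₁mem : a₁ ∈ L₀ := by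
          rw [hL₀]
          exact mem_lann_singleton.mpr ha₁u
        rw [← heq] at ha₁mem
        have h0 := mem_lann_singleton.mp ha₁mem
        have hcalc : a₁ * (a₀ + (s₀ + xs) * b) = a₁ * (s₁ * a₂) * b := by
          rw [hrw, mul_add, ha₁u, zero_add, hxs]
          noncomm_ring
        rw [hcalc] at h0
        apply hs₁ne
        calc a₁ * (s₁ * a₂) = a₁ * (s₁ * a₂) * b * ↑ub⁻¹ := by
              rw [mul_assoc (a₁ * (s₁ * a₂)) b ↑ub⁻¹, ← hub, Units.mul_inv, mul_one]
        _ = 0 := by rw [h0, zero_mul]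
      exact hmin _ hmem' (lt_of_le_of_ne hsub hstrict)
  obtain ⟨s, hsS, hunit⟩ := main
  refine ⟨s, hsS, ?_⟩
  have hcs : c + s = (a₀ + s * b) * ↑ub⁻¹ := by
    rw [add_mul, ← hab, mul_assoc, mul_assoc, ← hub, Units.mul_inv, mul_one, mul_one]
  rw [hcs]
  exact hunit.mul (Units.isUnit ub⁻¹)

end Coset

section NuR

theorem subset_nuR (I : Set Q) : I ⊆ nuR S I := fun x hx _ hb => hb x hx

theorem nuR_subset {I : Set Q} (hI : I ⊆ (S : Set Q)) : nuR S I ⊆ (S : Set Q) := by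
  intro z hz
  have h1 : (1 : Q) ∈ colonL (S : Set Q) I := by
    intro b hb
    rw [one_mul]
    exact hI hb
  have := hz 1 h1
  rwa [one_mul] at this

theorem colonL_anti {I J : Set Q} (h : I ⊆ J) :
    colonL (S : Set Q) J ⊆ colonL (S : Set Q) I := fun q hq b hb => hq b (h hb)

theorem nuR_mono {I J : Set Q} (h : I ⊆ J) : nuR S I ⊆ nuR S J :=
  fun z hz b hb => hz b (colonL_anti h hb)

theorem colonL_nuR (I : Set Q) : colonL (S : Set Q) (nuR S I) = colonL (S : Set Q) I :=
  subset_antisymm (colonL_anti (subset_nuR I)) (fun q hq z hz => hz q hq)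

theorem nuR_idem (I : Set Q) : nuR S (nuR S I) = nuR S I := by
  show colonR (S : Set Q) (colonL (S : Set Q) (nuR S I)) = nuR S I
  rw [colonL_nuR]
  rfl

theorem nuR_rightIdeal {I : Set Q} (hI : I ⊆ (S : Set Q)) : IsRightIdealSet S (nuR S I) := by
  refine ⟨⟨?_, ?_, ?_, ?_⟩, nuR_subset hI⟩
  · intro b _
    rw [mul_zero]
    exact S.zero_mem
  · intro x hx y hy b hb
    rw [mul_add]
    exact S.add_mem (hx b hb) (hy b hb)
  · intro x hx b hb
    rw [mul_neg]
    exact S.neg_mem (hx b hb)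
  · intro x hx s hs b hb
    rw [← mul_assoc]
    exact S.mul_mem (hx b hb) hs

theorem nuR_inter {A B : Set Q} (hA : nuR S A = A) (hB : nuR S B = B) :
    nuR S (A ∩ B) = A ∩ B :=
  subset_antisymm
    (fun z hz => ⟨hA ▸ nuR_mono Set.inter_subset_left hz, hB ▸ nuR_mono Set.inter_subset_right hz⟩)
    (subset_nuR _)

theorem rightIdeal_inter {A B : Set Q} (hA : IsRightIdealSet S A) (hB : IsRightIdealSet S B) :
    IsRightIdealSet S (A ∩ B) := by
  refine ⟨⟨⟨hA.1.1, hB.1.1⟩, ?_, ?_, ?_⟩, fun x hx => hA.2 hx.1⟩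
  · intro x hx y hy
    exact ⟨hA.1.2.1 x hx.1 y hy.1, hB.1.2.1 x hx.2 y hy.2⟩
  · intro x hx
    exact ⟨hA.1.2.2.1 x hx.1, hB.1.2.2.1 x hx.2⟩
  · intro x hx s hs
    exact ⟨hA.1.2.2.2 x hx.1 s hs, hB.1.2.2.2 x hx.2 s hs⟩

theorem span_mul_denom (hS : IsOrderIn S) {X : Set Q} (hmod : IsRightModSet S X) {z : Q}
    (hz : z ∈ Submodule.span Qᵐᵒᵖ X) : ∃ d, IsRegularElemIn S d ∧ z * d ∈ X := by
  classical
  obtain ⟨cfn, hsupp, hsum⟩ := Submodule.mem_span_set.mp hz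
  obtain ⟨d, hd, hdl⟩ := cd_list hS (cfn.support.toList.map (fun m => (cfn m).unop))
  refine ⟨d, hd, ?_⟩
  rw [← hsum, Finsupp.sum, Finset.sum_mul]
  apply Finset.sum_induction _ (· ∈ X) (fun a b ha hb => hmod.2.1 a ha b hb) hmod.1
  intro m hm
  have heq : (cfn m • m) * d = m * ((cfn m).unop * d) := by
    rw [MulOpposite.smul_eq_mul_unop, mul_assoc]
  rw [heq]
  have hmem : (cfn m).unop * d ∈ S :=
    hdl _ (List.mem_map.mpr ⟨m, Finset.mem_toList.mpr hm, rfl⟩)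
  exact hmod.2.2.2 m (hsupp hm) _ hmem

end NuR

section ACCStar
variable [IsSimpleRing Q] [IsArtinianRing Q]

/-- Strengthened ACC: in a right Mori order, the ascending chain condition holds for *all*
integral right divisorial ideals, not only the regular ones. -/
theorem acc_star (hS : IsOrderIn S) (hacc : ACCRightDivisorial S) (f : ℕ → Set Q)
    (hf : ∀ n, IsRightIdealSet S (f n) ∧ nuR S (f n) = f n)
    (hmono : ∀ n, f n ⊆ f (n + 1)) : ∃ N, ∀ n, N ≤ n → f n = f N := by
  haveI hss : IsSemisimpleRing Q := ssQ
  have hmono2 : ∀ m n, m ≤ n → f m ⊆ f n := fun m n h =>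
    Nat.le_induction subset_rfl (fun k _ ih => ih.trans (hmono k)) n h
  set Nsp : ℕ → Submodule Qᵐᵒᵖ Q := fun i => Submodule.span Qᵐᵒᵖ (f i) with hNsp
  have hNmono : ∀ m n, m ≤ n → Nsp m ≤ Nsp n := fun m n h =>
    Submodule.span_mono (hmono2 m n h)
  have hstab : ∃ n₀, ∀ n, n₀ ≤ n → Nsp n = Nsp n₀ := by
    have hΛmono : Monotone (fun i => OrderDual.toDual (lannSet (Nsp i : Set Q))) := by
      intro i j hij
      show lannSet (Nsp j : Set Q) ≤ lannSet (Nsp i : Set Q)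
      intro y hy x hx
      exact hy x (hNmono i j hij hx)
    obtain ⟨n₀, hn₀⟩ := IsArtinian.monotone_stabilizes
      ⟨fun i => OrderDual.toDual (lannSet (Nsp i : Set Q)), hΛmono⟩
    refine ⟨n₀, fun n hn => ?_⟩
    refine le_antisymm ?_ (hNmono _ _ hn)
    apply rid_le_of_lann
    intro y hy x hx
    have heq : lannSet ((Nsp n₀ : Submodule Qᵐᵒᵖ Q) : Set Q) = lannSet (Nsp n : Set Q) := by
      have := hn₀ n hn
      simpa using this
    have hy' : y ∈ lannSet (Nsp n₀ : Set Q) := hy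
    rw [heq] at hy'
    exact hy' x hx
  obtain ⟨n₀, hn₀⟩ := hstab
  by_cases htop : (1 : Q) ∈ Nsp n₀
  · have hreg : ∀ n, n₀ ≤ n → ∃ a ∈ f n, IsRegularElemIn S a := by
      intro n hn
      have h1 : (1 : Q) ∈ Nsp n := by
        rw [hn₀ n hn]
        exact htop
      obtain ⟨d, hd, hdX⟩ := span_mul_denom hS (hf n).1.1 h1
      rw [one_mul] at hdX
      exact ⟨d, hdX, hd⟩
    obtain ⟨N₁, hN₁⟩ := hacc (fun i => f (n₀ + i))
      (fun i => ⟨(hf _).1, hreg _ (Nat.le_add_right _ _), (hf _).2⟩)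
      (fun i => by
        have := hmono (n₀ + i)
        simpa [show n₀ + (i + 1) = n₀ + i + 1 by omega] using this)
    refine ⟨n₀ + N₁, fun n hn => ?_⟩
    have hn' : n₀ ≤ n := le_trans (Nat.le_add_right _ _) hn
    have h1 : f n = f (n₀ + (n - n₀)) := by rw [Nat.add_sub_cancel' hn']
    rw [h1, hN₁ (n - n₀) (by omega)]
  · obtain ⟨f₀, hf₀, hf₀mem, hNspan⟩ := rid_idem (Nsp n₀)
    set g₀ : Q := 1 - f₀ with hg₀
    have hfix : ∀ a ∈ Nsp n₀, f₀ * a = a := by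
      intro a ha
      rw [hNspan] at ha
      obtain ⟨r, rfl⟩ := mem_rspan_singleton.mp ha
      rw [← mul_assoc, hf₀]
    have hkill : ∀ r : Q, f₀ * (g₀ * r) = 0 := by
      intro r
      rw [← mul_assoc, hg₀, mul_sub, mul_one, hf₀, sub_self, zero_mul]
    set K : Set Q := {k | k ∈ S ∧ ∃ r : Q, k = g₀ * r} with hK
    obtain ⟨d₁, hd₁, hd₁X⟩ := span_mul_denom hS (hf n₀).1.1 hf₀mem
    obtain ⟨s₂, b₂, hs₂S, hb₂reg, hgb₂⟩ := hS.2.2 (g₀ * d₁)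
    set d : Q := d₁ * b₂ with hd
    have hdreg : IsRegularElemIn S d := reg_mul hS hd₁ hb₂reg
    have hfg : f₀ + g₀ = 1 := by rw [hg₀]; abel
    have hdsum : d = f₀ * d + g₀ * d := by rw [← add_mul, hfg, one_mul]
    have hd_f : f₀ * d ∈ f n₀ := by
      rw [hd, ← mul_assoc]
      exact (hf n₀).1.1.2.2.2 _ hd₁X _ hb₂reg.1
    have hd_K : g₀ * d ∈ K := by
      refine ⟨?_, d, rfl⟩
      rw [hd, ← mul_assoc, hgb₂]
      exact hs₂S
    set B : ℕ → Set Q := fun i => nuR S {w | ∃ a ∈ f i, ∃ k ∈ K, w = a + k} with hB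
    have hAKsub : ∀ i, {w | ∃ a ∈ f i, ∃ k ∈ K, w = a + k} ⊆ (S : Set Q) := by
      rintro i w ⟨a, ha, k, hk, rfl⟩
      exact S.add_mem ((hf i).1.2 ha) hk.1
    have hAKmod : ∀ i, IsRightModSet S {w | ∃ a ∈ f i, ∃ k ∈ K, w = a + k} := by
      intro i
      refine ⟨⟨0, (hf i).1.1.1, 0, ⟨S.zero_mem, 0, by rw [mul_zero]⟩, by rw [add_zero]⟩,
        ?_, ?_, ?_⟩
      · rintro x ⟨a, ha, k, ⟨hkS, r, rfl⟩, rfl⟩ y ⟨a', ha', k', ⟨hk'S, r', rfl⟩, rfl⟩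
        exact ⟨a + a', (hf i).1.1.2.1 a ha a' ha', g₀ * r + g₀ * r',
          ⟨S.add_mem hkS hk'S, r + r', by rw [mul_add]⟩, by abel⟩
      · rintro x ⟨a, ha, k, ⟨hkS, r, rfl⟩, rfl⟩
        exact ⟨-a, (hf i).1.1.2.2.1 a ha, g₀ * (-r),
          ⟨by rw [mul_neg]; exact S.neg_mem hkS, -r, rfl⟩, by rw [mul_neg]; abel⟩
      · rintro x ⟨a, ha, k, ⟨hkS, r, rfl⟩, rfl⟩ s hs
        exact ⟨a * s, (hf i).1.1.2.2.2 a ha s hs, g₀ * (r * s),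
          ⟨by rw [← mul_assoc]; exact S.mul_mem hkS hs, r * s, rfl⟩,
          by rw [add_mul, mul_assoc]⟩
    have hsubB : ∀ i, f i ⊆ B i := fun i x hx =>
      subset_nuR _ ⟨x, hx, 0, ⟨S.zero_mem, 0, by rw [mul_zero]⟩, by rw [add_zero]⟩
    have hBmono : ∀ i, B i ⊆ B (i + 1) := fun i => nuR_mono (by
      rintro w ⟨a, ha, k, hk, rfl⟩
      exact ⟨a, hmono i ha, k, hk, rfl⟩)
    have hBprop : ∀ i, IsRightIdealSet S (B i) ∧ nuR S (B i) = B i := fun i =>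
      ⟨nuR_rightIdeal (hAKsub i), nuR_idem _⟩
    have hBreg : ∀ i, n₀ ≤ i → ∃ a ∈ B i, IsRegularElemIn S a := by
      intro i hi
      refine ⟨d, subset_nuR _ ⟨f₀ * d, hmono2 n₀ i hi hd_f, g₀ * d, hd_K, hdsum⟩, hdreg⟩
    obtain ⟨N₁, hN₁⟩ := hacc (fun i => B (n₀ + i))
      (fun i => ⟨(hBprop _).1, hBreg _ (Nat.le_add_right _ _), (hBprop _).2⟩)
      (fun i => by
        have := hBmono (n₀ + i)
        simpa [show n₀ + (i + 1) = n₀ + i + 1 by omega] using this)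
    have hrec : ∀ i, n₀ ≤ i → f i = B i ∩ (Nsp n₀ : Set Q) := by
      intro i hi
      apply subset_antisymm
      · intro x hx
        refine ⟨hsubB i hx, ?_⟩
        rw [← hn₀ i hi]
        exact Submodule.subset_span hx
      · rintro z ⟨hzB, hzN⟩
        have hzf : f₀ * z = z := hfix z hzN
        rw [← (hf i).2]
        intro q hq
        have hqf : q * f₀ ∈ colonL (S : Set Q) {w | ∃ a ∈ f i, ∃ k ∈ K, w = a + k} := by
          rintro w ⟨a, ha, k, ⟨hkS, r, rfl⟩, rfl⟩
          have haN : a ∈ Nsp n₀ := by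
            rw [← hn₀ i hi]
            exact Submodule.subset_span ha
          have h1 : q * f₀ * a = q * a := by rw [mul_assoc, hfix a haN]
          have h2 : q * f₀ * (g₀ * r) = 0 := by rw [mul_assoc, hkill r, mul_zero]
          rw [mul_add, h1, h2, add_zero]
          exact hq a ha
        have hz1 := hzB _ hqf
        rwa [mul_assoc, hzf] at hz1
    refine ⟨n₀ + N₁, fun n hn => ?_⟩
    have hn' : n₀ ≤ n := le_trans (Nat.le_add_right _ _) hn
    have hBeq : B n = B (n₀ + N₁) := by
      have h1 : B n = B (n₀ + (n - n₀)) := by rw [Nat.add_sub_cancel' hn']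
      rw [h1, hN₁ (n - n₀) (by omega)]
    rw [hrec n hn', hrec (n₀ + N₁) (Nat.le_add_right _ _), hBeq]

end ACCStar

section Main
variable [IsSimpleRing Q] [IsArtinianRing Q]

/-- `I` is a finite intersection of ν-irreducible right divisorial right ideals. -/
def Decomp (S : Subring Q) (I : Set Q) : Prop :=
  ∃ (n : ℕ) (J : Fin (n + 1) → Set Q), (∀ k, IsNuIrreducible S (J k)) ∧ I = ⋂ k, J k

omit [IsSimpleRing Q] [IsArtinianRing Q] in
theorem decomp_of_nuIrr {I : Set Q} (h : IsNuIrreducible S I) : Decomp S I :=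
  ⟨0, fun _ => I, fun _ => h, (Set.iInter_const I).symm⟩

omit [IsSimpleRing Q] [IsArtinianRing Q] in
theorem decomp_inter {A B : Set Q} (hA : Decomp S A) (hB : Decomp S B) : Decomp S (A ∩ B) := by
  obtain ⟨n, J₁, hJ₁, rfl⟩ := hA
  obtain ⟨m, J₂, hJ₂, rfl⟩ := hB
  refine ⟨n + 1 + m, Fin.addCases (m := n + 1) (n := m + 1) (motive := fun _ => Set Q) J₁ J₂, ?_, ?_⟩
  · intro k
    refine Fin.addCases (m := n + 1) (n := m + 1) (fun i => ?_) (fun j => ?_) k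
    · rw [Fin.addCases_left]
      exact hJ₁ i
    · rw [Fin.addCases_right]
      exact hJ₂ j
  · ext x
    simp only [Set.mem_inter_iff, Set.mem_iInter]
    constructor
    · rintro ⟨h1, h2⟩ k
      refine Fin.addCases (m := n + 1) (n := m + 1) (fun i => ?_) (fun j => ?_) k
      · rw [Fin.addCases_left]
        exact h1 i
      · rw [Fin.addCases_right]
        exact h2 j
    · intro h
      constructor
      · intro i
        have := h (Fin.castAdd (m + 1) i)
        rwa [Fin.addCases_left] at this
      · intro j
        have := h (Fin.natAdd (n + 1) j)
        rwa [Fin.addCases_right] at this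

theorem part1 (hS : IsOrderIn S) (hacc : ACCRightDivisorial S)
    {I : Set Q} (hI : IsRightIdealSet S I) (hdiv : nuR S I = I) : Decomp S I := by
  by_contra hbad
  have step : ∀ X : Set Q, IsRightIdealSet S X → nuR S X = X → ¬Decomp S X →
      ∃ Y : Set Q, (IsRightIdealSet S Y ∧ nuR S Y = Y ∧ ¬Decomp S Y) ∧ X ⊆ Y ∧ X ≠ Y := by
    intro X hX hXdiv hXbad
    have hnotirr : ¬IsNuIrreducible S X := fun h => hXbad (decomp_of_nuIrr h)
    have hex : ∃ A B : Set Q, (IsRightIdealSet S A ∧ nuR S A = A) ∧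
        (IsRightIdealSet S B ∧ nuR S B = B) ∧ X ⊂ A ∧ X ⊂ B ∧ X = A ∩ B := by
      by_contra hcon
      exact hnotirr ⟨hX, hXdiv, hcon⟩
    obtain ⟨A, B, ⟨hAI, hAdiv⟩, ⟨hBI, hBdiv⟩, hXA, hXB, hXAB⟩ := hex
    by_cases hA : Decomp S A
    · by_cases hB : Decomp S B
      · exact absurd (hXAB ▸ decomp_inter hA hB) hXbad
      · exact ⟨B, ⟨hBI, hBdiv, hB⟩, hXB.1, hXB.ne⟩
    · exact ⟨A, ⟨hAI, hAdiv, hA⟩, hXA.1, hXA.ne⟩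
  classical
  have hstep' : ∀ X : {X : Set Q // IsRightIdealSet S X ∧ nuR S X = X ∧ ¬Decomp S X},
      ∃ Y : {X : Set Q // IsRightIdealSet S X ∧ nuR S X = X ∧ ¬Decomp S X},
        X.1 ⊆ Y.1 ∧ X.1 ≠ Y.1 := by
    rintro ⟨X, hX1, hX2, hX3⟩
    obtain ⟨Y, hY, hsub, hne⟩ := step X hX1 hX2 hX3
    exact ⟨⟨Y, hY⟩, hsub, hne⟩
  set F : ℕ → {X : Set Q // IsRightIdealSet S X ∧ nuR S X = X ∧ ¬Decomp S X} :=
    fun n => Nat.rec ⟨I, hI, hdiv, hbad⟩ (fun _ X => Classical.choose (hstep' X)) n with hF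
  have hFs : ∀ n, (F n).1 ⊆ (F (n + 1)).1 ∧ (F n).1 ≠ (F (n + 1)).1 := fun n =>
    Classical.choose_spec (hstep' (F n))
  obtain ⟨N, hN⟩ := acc_star hS hacc (fun n => (F n).1)
    (fun n => ⟨(F n).2.1, (F n).2.2.1⟩) (fun n => (hFs n).1)
  exact (hFs N).2 (hN (N + 1) (Nat.le_succ N)).symm

omit [IsSimpleRing Q] [IsArtinianRing Q] in
theorem Dc_rightIdeal (c : Q) : IsRightIdealSet S {s : Q | s ∈ S ∧ c * s ∈ S} := by
  refine ⟨⟨⟨S.zero_mem, by rw [mul_zero]; exact S.zero_mem⟩, ?_, ?_, ?_⟩, fun x hx => hx.1⟩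
  · rintro x ⟨hx1, hx2⟩ y ⟨hy1, hy2⟩
    exact ⟨S.add_mem hx1 hy1, by rw [mul_add]; exact S.add_mem hx2 hy2⟩
  · rintro x ⟨hx1, hx2⟩
    exact ⟨S.neg_mem hx1, by rw [mul_neg]; exact S.neg_mem hx2⟩
  · rintro x ⟨hx1, hx2⟩ s hs
    exact ⟨S.mul_mem hx1 hs, by rw [← mul_assoc]; exact S.mul_mem hx2 hs⟩

omit [IsSimpleRing Q] [IsArtinianRing Q] in
theorem Dc_div (c : Q) :
    nuR S {s : Q | s ∈ S ∧ c * s ∈ S} = {s : Q | s ∈ S ∧ c * s ∈ S} := by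
  apply subset_antisymm _ (subset_nuR _)
  intro z hz
  have h1 : (1 : Q) ∈ colonL (S : Set Q) {s : Q | s ∈ S ∧ c * s ∈ S} := by
    intro b hb
    rw [one_mul]
    exact hb.1
  have hc : c ∈ colonL (S : Set Q) {s : Q | s ∈ S ∧ c * s ∈ S} := fun b hb => hb.2
  refine ⟨?_, hz c hc⟩
  have := hz 1 h1
  rwa [one_mul] at this

theorem part2 (hS : IsOrderIn S)
    {I' : Set Q} (hI' : IsNuIrreducible S I')
    (hcov : ∃ C : Set Q, (IsRightIdealSet S C ∧ nuR S C = C) ∧ I' ⊂ C ∧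
      ∀ K : Set Q, IsRightIdealSet S K → nuR S K = K → I' ⊂ K → K ⊆ C → K = C) :
    ∃ a b : Q, IsRegularElemIn S a ∧ IsRegularElemIn S b ∧
      I' = {s : Q | s ∈ S ∧ b * s ∈ principalRight S a} := by
  obtain ⟨hIid, hIdiv, hirr⟩ := hI'
  obtain ⟨C, ⟨hCid, hCdiv⟩, hIC, hmin⟩ := hcov
  have hkey : ∃ c : Q, IsUnit c ∧ (∀ w ∈ I', c * w ∈ S) ∧
      {s : Q | s ∈ S ∧ c * s ∈ S} = I' := by
    by_contra hno
    push_neg at hno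
    have hCsub : ∀ c : Q, IsUnit c → (∀ w ∈ I', c * w ∈ S) →
        C ⊆ {s : Q | s ∈ S ∧ c * s ∈ S} := by
      intro c hcu hcL
      have hID : I' ⊆ {s : Q | s ∈ S ∧ c * s ∈ S} := fun w hw => ⟨hIid.2 hw, hcL w hw⟩
      have hne := hno c hcu hcL
      have hinterid := rightIdeal_inter (Dc_rightIdeal c) hCid
      have hinterdiv := nuR_inter (Dc_div c) hCdiv
      rcases eq_or_ne ({s : Q | s ∈ S ∧ c * s ∈ S} ∩ C) I' with heq | hne2
      · exfalso
        apply hirr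
        refine ⟨{s : Q | s ∈ S ∧ c * s ∈ S}, C, ⟨Dc_rightIdeal c, Dc_div c⟩,
          ⟨hCid, hCdiv⟩, ?_, hIC, heq.symm⟩
        rw [Set.ssubset_iff_subset_ne]
        exact ⟨hID, Ne.symm hne⟩
      · have hsub2 : I' ⊂ {s : Q | s ∈ S ∧ c * s ∈ S} ∩ C := by
          rw [Set.ssubset_iff_subset_ne]
          exact ⟨fun w hw => ⟨hID hw, hIC.1 hw⟩, Ne.symm hne2⟩
        have heqC := hmin _ hinterid hinterdiv hsub2 Set.inter_subset_right
        intro q hq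
        have hq2 : q ∈ {s : Q | s ∈ S ∧ c * s ∈ S} ∩ C := by
          rw [heqC]
          exact hq
        exact hq2.1
    have hCI : C ⊆ I' := by
      intro q hq
      by_contra hqI
      have hq0 : ¬∀ b ∈ colonL (S : Set Q) I', b * q ∈ (S : Set Q) := by
        intro hall
        exact hqI (hIdiv ▸ hall)
      push_neg at hq0
      obtain ⟨c₀, hc₀L, hc₀q⟩ := hq0
      obtain ⟨t, htS, htu⟩ := coset_unit hS c₀
      have hcL : ∀ w ∈ I', (c₀ + t) * w ∈ S := by
        intro w hw
        rw [add_mul]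
        exact S.add_mem (hc₀L w hw) (S.mul_mem htS (hIid.2 hw))
      have hcq := (hCsub _ htu hcL hq).2
      apply hc₀q
      have hqS : q ∈ S := hCid.2 hq
      have h2 : c₀ * q = (c₀ + t) * q - t * q := by rw [add_mul]; abel
      rw [h2]
      exact S.sub_mem hcq (S.mul_mem htS hqS)
    exact hIC.2 hCI
  obtain ⟨c, hcu, hcL, hDc⟩ := hkey
  obtain ⟨a₁, b₁, ha₁S, hb₁reg, hab₁⟩ := hS.2.1 c
  obtain ⟨ub₁, hub₁⟩ := hS.1 b₁ hb₁reg
  have ha₁u : IsUnit a₁ := by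
    rw [← hab₁]
    exact (hS.1 b₁ hb₁reg).mul hcu
  refine ⟨b₁, a₁, hb₁reg, unit_reg ha₁S ha₁u, ?_⟩
  rw [← hDc]
  ext s
  simp only [Set.mem_setOf_eq, principalRight]
  constructor
  · rintro ⟨hsS, hcs⟩
    exact ⟨hsS, ⟨c * s, hcs, by rw [← hab₁, mul_assoc]⟩⟩
  · rintro ⟨hsS, t, htS, hts⟩
    refine ⟨hsS, ?_⟩
    have h1 : b₁ * (c * s) = b₁ * t := by rw [← mul_assoc, hab₁, hts]
    have h2 : c * s = t := by
      calc c * s = ↑ub₁⁻¹ * (b₁ * (c * s)) := by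
            rw [← mul_assoc, ← hub₁, Units.inv_mul, one_mul]
      _ = ↑ub₁⁻¹ * (b₁ * t) := by rw [h1]
      _ = t := by rw [← mul_assoc, ← hub₁, Units.inv_mul, one_mul]
    rw [h2]
    exact htS

end Main

end MoriAux

/-- Proposition 4.3. In a right Mori order `S`, every right
divisorial right ideal `I` is a finite intersection of `ν`-irreducible right
divisorial right ideals, and every `ν`-irreducible right divisorial right ideal
admitting a cover has the form `aS :_r b` for some regular `a, b ∈ S`. -/
theorem rightDivisorial_finiteIntersection_nuIrreducible
    {Q : Type*} [Ring Q] [IsSimpleRing Q] [IsArtinianRing Q]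
    (S : Subring Q) (hS : IsRightMori S) (I : Set Q)
    (hI : IsRightIdealSet S I) (hdiv : nuR S I = I) :
    (∃ (n : ℕ) (J : Fin (n + 1) → Set Q),
        (∀ k, IsNuIrreducible S (J k)) ∧ I = ⋂ k, J k) ∧
    (∀ I' : Set Q, IsNuIrreducible S I' →
      (∃ C : Set Q, (IsRightIdealSet S C ∧ nuR S C = C) ∧ I' ⊂ C ∧
        ∀ K : Set Q, IsRightIdealSet S K → nuR S K = K → I' ⊂ K → K ⊆ C → K = C) →
      ∃ a b : Q, IsRegularElemIn S a ∧ IsRegularElemIn S b ∧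
        I' = {s : Q | s ∈ S ∧ b * s ∈ principalRight S a}) := by
  obtain ⟨hord, hacc⟩ := hS
  constructor
  · exact MoriAux.part1 hord hacc hI hdiv
  · intro I' hI' hcov
    exact MoriAux.part2 hord hI' hcov
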